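/- Let θ12 be a real number with π/6 ≤ θ12 ≤ π/3, and let θ13, θ14, θ23, θ24 be real numbers in the open interval (0, π/2) such that θ13 + θ14 + θ23 + θ24 ≤ π − θ12, each of θ13, θ14, θ23, θ24 is at most 7π/12 − θ12, and each of the sums θ13+θ14, θ23+θ24, θ13+θ23, θ14+θ24 is at most 7π/12. Then cos θ13 · cos θ24 + cos θ14 · cos θ23 ≥ 2 · sin(θ12 / 2). -/

import Mathlib

open Real

lemma prod_eq (m d : ℝ) :
    cos (m + d) * cos (m - d) = cos m ^ 2 - sin d ^ 2 := by
  rw [Real.cos_add, Real.cos_sub]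
  nlinarith [Real.sin_sq_add_cos_sq m, Real.sin_sq_add_cos_sq d]

-- identity: cos m^2 - sin m * sin (B - m) = cos (B/2)^2 - sin(B/2) * sin(2m - B/2)
lemma mid_id (m B : ℝ) :
    cos m ^ 2 - sin m * sin (B - m) = cos (B/2) ^ 2 - sin (B/2) * sin (2*m - B/2) := by
  have e1 : sin (B - m) = sin B * cos m - cos B * sin m := Real.sin_sub B m
  have e2 : sin B = 2 * sin (B/2) * cos (B/2) := by
    have := Real.sin_two_mul (B/2); rw [show 2*(B/2) = B by ring] at this; linarith
  have e3 : cos B = 2 * cos (B/2) ^ 2 - 1 := by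
    have := Real.cos_two_mul (B/2); rw [show 2*(B/2) = B by ring] at this; linarith
  have e4 : sin (2*m - B/2) = sin (2*m) * cos (B/2) - cos (2*m) * sin (B/2) :=
    Real.sin_sub _ _
  have e5 : sin (2*m) = 2 * sin m * cos m := Real.sin_two_mul m
  have e6 : cos (2*m) = 2 * cos m ^ 2 - 1 := Real.cos_two_mul m
  rw [e1, e2, e3, e4, e5, e6]
  nlinarith [Real.sin_sq_add_cos_sq m, Real.sin_sq_add_cos_sq (B/2)]

lemma lemA (a b B : ℝ) (ha : 0 < a) (hb : 0 < b) (haB : a ≤ B) (hbB : b ≤ B)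
    (hB : B ≤ π / 2) :
    cos (B/2) ^ 2 - sin (B/2) * sin (a + b - B/2) ≤ cos a * cos b := by
  have hab : cos a * cos b = cos ((a+b)/2) ^ 2 - sin ((a-b)/2) ^ 2 := by
    have := prod_eq ((a+b)/2) ((a-b)/2)
    rw [show (a+b)/2 + (a-b)/2 = a by ring, show (a+b)/2 - (a-b)/2 = b by ring] at this
    exact this
  set m := (a+b)/2 with hm
  set d := (a-b)/2 with hd
  -- bound sin d ^2 ≤ sin m * sin (B - m)
  have habs : sin d ^ 2 = sin |d| ^ 2 := by
    rcases abs_cases d with ⟨h, _⟩ | ⟨h, _⟩ <;> rw [h]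
    rw [Real.sin_neg]; ring
  have hd1 : |d| ≤ m := by
    rcases abs_cases d with ⟨h, _⟩ | ⟨h, _⟩ <;> rw [h] <;> [skip; skip] <;>
      simp only [hm, hd] <;> linarith
  have hd2 : |d| ≤ B - m := by
    rcases abs_cases d with ⟨h, _⟩ | ⟨h, _⟩ <;> rw [h] <;>
      simp only [hm, hd] <;> linarith
  have hd0 : 0 ≤ |d| := abs_nonneg d
  have hm2 : m ≤ π / 2 := by simp only [hm]; linarith
  have hBm2 : B - m ≤ π / 2 := by simp only [hm]; linarith
  have hs1 : sin |d| ≤ sin m :=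
    Real.sin_le_sin_of_le_of_le_pi_div_two (by linarith) hm2 hd1
  have hs2 : sin |d| ≤ sin (B - m) :=
    Real.sin_le_sin_of_le_of_le_pi_div_two (by linarith) hBm2 hd2
  have hs0 : 0 ≤ sin |d| := Real.sin_nonneg_of_nonneg_of_le_pi hd0 (by linarith [Real.pi_pos])
  have hkey : sin d ^ 2 ≤ sin m * sin (B - m) := by
    rw [habs]
    calc sin |d| ^ 2 = sin |d| * sin |d| := sq (sin |d|) ▸ by ring
      _ ≤ sin m * sin (B - m) := mul_le_mul hs1 hs2 hs0 (by linarith [hs0, hs1])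
  have hid := mid_id m B
  have h2m : 2 * m - B/2 = a + b - B/2 := by simp only [hm]; ring
  rw [h2m] at hid
  linarith [hab, hkey, hid]

lemma lemB (x y : ℝ) (hxy : x + y ≤ 5*π/12) (hlow : -π ≤ x + y) (hd : |x - y| ≤ π) :
    sin x + sin y ≤ 2 * sin (5*π/24) := by
  have h : sin x + sin y = 2 * sin ((x+y)/2) * cos ((x-y)/2) := by
    have := Real.sin_sub_sin x (-y)
    simpa [sub_eq_add_neg] using this
  rw [h]
  have habsd : |(x-y)/2| ≤ π/2 := by
    rw [abs_div]
    rw [abs_of_pos (by norm_num : (0:ℝ) < 2)]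
    linarith [hd]
  have hc0 : 0 ≤ cos ((x-y)/2) := by
    apply Real.cos_nonneg_of_mem_Icc
    constructor <;> [linarith [abs_le.mp habsd|>.1]; linarith [abs_le.mp habsd|>.2]]
  have hc1 : cos ((x-y)/2) ≤ 1 := Real.cos_le_one _
  have hspos : 0 < sin (5*π/24) := Real.sin_pos_of_pos_of_lt_pi (by positivity)
    (by linarith [Real.pi_pos])
  rcases le_or_gt (sin ((x+y)/2)) 0 with hs | hs
  · nlinarith
  · have hmono : sin ((x+y)/2) ≤ sin (5*π/24) :=
      Real.sin_le_sin_of_le_of_le_pi_div_two (by linarith) (by linarith [Real.pi_pos])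
        (by linarith)
    nlinarith

lemma lemC (t : ℝ) (h1 : π/6 ≤ t) (h2 : t ≤ π/3) :
    2 * sin (t/2) ≤ 2 * cos ((7*π/12 - t)/2) ^ 2 - 2 * sin ((7*π/12 - t)/2) * sin (5*π/24) := by
  set B := 7*π/12 - t with hB
  clear_value B
  -- i1 : 2 cos(B/2)^2 = 1 + cos B
  have i1 : 2 * cos (B/2) ^ 2 = 1 + cos B := by
    have := Real.cos_two_mul (B/2); rw [show 2*(B/2) = B by ring] at this; linarith
  -- i2 : cos B = sin (t - π/12)
  have i2 : cos B = sin (t - π/12) := by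
    rw [show B = π/2 - (t - π/12) by rw [hB]; ring, Real.cos_pi_div_two_sub]
  -- i3 : 2 sin(B/2) sin(5π/24) = cos (t/2 - π/12) - sin (t/2)
  have i3 : 2 * sin (B/2) * sin (5*π/24) = cos (t/2 - π/12) - sin (t/2) := by
    have := Real.two_mul_sin_mul_sin (B/2) (5*π/24)
    rw [show B/2 - 5*π/24 = -(t/2 - π/12) by rw [hB]; ring,
        show B/2 + 5*π/24 = π/2 - t/2 by rw [hB]; ring,
        Real.cos_neg, Real.cos_pi_div_two_sub] at this
    linarith
  rw [i1, i2]
  have i3' : 2 * sin (B/2) * sin (5*π/24) = cos (t/2 - π/12) - sin (t/2) := i3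
  -- suffices: 1 + sin(t-π/12) - cos(t/2-π/12) - sin(t/2) ≥ 0
  set w := t/4 - π/24 with hw
  clear_value w
  have hw0 : 0 ≤ w := by rw [hw]; linarith
  have hw1 : w ≤ π/24 := by rw [hw]; linarith
  have e1 : 1 - cos (t/2 - π/12) = 2 * sin w ^ 2 := by
    have := Real.cos_two_mul w
    rw [show 2*w = t/2 - π/12 by rw [hw]; ring] at this
    nlinarith [Real.sin_sq_add_cos_sq w]
  have e2 : sin (t - π/12) - sin (t/2) = 2 * sin w * cos (3*w + π/12) := by
    have := Real.sin_sub_sin (t - π/12) (t/2)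
    rw [show (t - π/12 - t/2)/2 = w by rw [hw]; ring,
        show (t - π/12 + t/2)/2 = 3*w + π/12 by rw [hw]; ring] at this
    linarith
  have hwpi : w ≤ π := by nlinarith [Real.pi_pos]
  have hsw : 0 ≤ sin w := Real.sin_nonneg_of_nonneg_of_le_pi hw0 hwpi
  have hcw : 0 ≤ cos (3*w + π/12) := by
    apply Real.cos_nonneg_of_mem_Icc
    constructor <;> [linarith [Real.pi_pos]; linarith]
  nlinarith [mul_nonneg hsw hcw, sq_nonneg (sin w)]

theorem stmt_2 (θ12 θ13 θ14 θ23 θ24 : ℝ)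
    (h12 : π / 6 ≤ θ12 ∧ θ12 ≤ π / 3)
    (h13 : θ13 ∈ Set.Ioo 0 (π / 2)) (h14 : θ14 ∈ Set.Ioo 0 (π / 2))
    (h23 : θ23 ∈ Set.Ioo 0 (π / 2)) (h24 : θ24 ∈ Set.Ioo 0 (π / 2))
    (hsum : θ13 + θ14 + θ23 + θ24 ≤ π - θ12)
    (hb13 : θ13 ≤ 7 * π / 12 - θ12) (hb14 : θ14 ≤ 7 * π / 12 - θ12)
    (hb23 : θ23 ≤ 7 * π / 12 - θ12) (hb24 : θ24 ≤ 7 * π / 12 - θ12)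
    (h5 : θ13 + θ14 ≤ 7 * π / 12) (h6 : θ23 + θ24 ≤ 7 * π / 12)
    (h7 : θ13 + θ23 ≤ 7 * π / 12) (h8 : θ14 + θ24 ≤ 7 * π / 12) :
    cos θ13 * cos θ24 + cos θ14 * cos θ23 ≥ 2 * sin (θ12 / 2) := by
  obtain ⟨h12a, h12b⟩ := h12
  obtain ⟨h13a, h13b⟩ := h13
  obtain ⟨h14a, h14b⟩ := h14
  obtain ⟨h23a, h23b⟩ := h23
  obtain ⟨h24a, h24b⟩ := h24
  have hpi := Real.pi_pos
  set B := 7 * π / 12 - θ12 with hB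
  clear_value B
  have hBle : B ≤ π / 2 := by rw [hB]; linarith
  have hBge : π / 4 ≤ B := by rw [hB]; linarith
  have hA1 : cos (B/2) ^ 2 - sin (B/2) * sin (θ13 + θ24 - B/2) ≤ cos θ13 * cos θ24 :=
    lemA θ13 θ24 B h13a h24a (by linarith) (by linarith) hBle
  have hA2 : cos (B/2) ^ 2 - sin (B/2) * sin (θ14 + θ23 - B/2) ≤ cos θ14 * cos θ23 :=
    lemA θ14 θ23 B h14a h23a (by linarith) (by linarith) hBle
  have hLB : sin (θ13 + θ24 - B/2) + sin (θ14 + θ23 - B/2) ≤ 2 * sin (5*π/24) := by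
    apply lemB
    · rw [hB]; linarith
    · linarith
    · rw [abs_le]; constructor <;> [linarith; linarith]
  have hsB : 0 ≤ sin (B/2) :=
    Real.sin_nonneg_of_nonneg_of_le_pi (by linarith) (by linarith)
  have hC : 2 * sin (θ12/2) ≤ 2 * cos (B/2) ^ 2 - 2 * sin (B/2) * sin (5*π/24) := by
    rw [hB]; exact lemC θ12 h12a h12b
  have hmul : sin (B/2) * (sin (θ13 + θ24 - B/2) + sin (θ14 + θ23 - B/2))
      ≤ sin (B/2) * (2 * sin (5*π/24)) := mul_le_mul_of_nonneg_left hLB hsB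
  have : 2 * sin (θ12 / 2) ≤ cos θ13 * cos θ24 + cos θ14 * cos θ23 := by nlinarith
  linarith
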